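/- Let 1 ≤ p < ∞, N ≥ 1 an integer, f ∈ L^p(ℝ,ℝ^N), and let a < b be real numbers. Then (∫_a^b |∫_s^t (f(x+y) − f(x+u)) dy|^p dx)^{1/p} = o(|t−s|) as |t−s| → 0, uniformly in u between s and t: for every ε > 0 there exists δ > 0 such that for all s, t, u ∈ ℝ with |t−s| ≤ δ and u lying between s and t, (∫_a^b |∫_s^t (f(x+y) − f(x+u)) dy|^p dx)^{1/p} ≤ ε|t−s|. -/

import Mathlib

open MeasureTheory Set
open scoped ENNReal Interval

noncomputable section

/-- `ℝ^N` with a fixed norm (the Euclidean one). -/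
abbrev Vec (N : ℕ) : Type := EuclideanSpace ℝ (Fin N)

/-- for `1 ≤ p < ∞` and `f ∈ L^p(ℝ,ℝ^N)`,
`(∫_a^b ‖∫_s^t (f(x+y) − f(x+u)) dy‖^p dx)^{1/p} = o(|t−s|)` as `|t−s| → 0`, uniformly in `u`
between `s` and `t`. -/
theorem stmt16 (N : ℕ) (hN : 1 ≤ N) (p : ℝ) (hp : 1 ≤ p)
    (f : ℝ → Vec N) (hf : MemLp f (ENNReal.ofReal p) (volume : Measure ℝ))
    (a b : ℝ) (hab : a < b) :
    ∀ ε > 0, ∃ δ > 0, ∀ s t u : ℝ, |t - s| ≤ δ → u ∈ Set.uIcc s t →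
      (∫ x in a..b, ‖∫ y in s..t, (f (x + y) - f (x + u))‖ ^ p) ^ (1 / p) ≤ ε * |t - s| := by
  intro ε hε
  have hp0 : (0:ℝ) < p := lt_of_lt_of_le one_pos hp
  set q : ℝ≥0∞ := ENNReal.ofReal p with hqdef
  have hq1 : (1:ℝ≥0∞) ≤ q := by
    rw [hqdef, ← ENNReal.ofReal_one]
    exact ENNReal.ofReal_le_ofReal hp
  have hq0 : q ≠ 0 := by
    intro h
    rw [h] at hq1
    simp at hq1
  have hqtop : q ≠ ∞ := ENNReal.ofReal_ne_top
  have hqr : q.toReal = p := ENNReal.toReal_ofReal hp0.le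
  haveI : Fact (1 ≤ q) := ⟨hq1⟩
  have hfm : AEStronglyMeasurable f (volume : Measure ℝ) := hf.1
  have htrans : ∀ v : ℝ, AEStronglyMeasurable (fun x => f (x + v)) (volume : Measure ℝ) :=
    fun v => hfm.comp_quasiMeasurePreserving
      (measurePreserving_add_right volume v).quasiMeasurePreserving
  -- Step A: continuity of translation in L^p
  obtain ⟨δ, hδ, hΦ⟩ : ∃ δ > 0, ∀ w : ℝ, |w| ≤ δ →
      eLpNorm (fun x => f (x + w) - f x) q volume ≤ ENNReal.ofReal ε := by
    set F : Lp (Vec N) q volume := hf.toLp f with hF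
    let C : C(ℝ × ℝ, ℝ) := ⟨fun z => z.2 + z.1, by fun_prop⟩
    have hgm : ∀ v : ℝ, MeasurePreserving (⇑(ContinuousMap.curry C v))
        (volume : Measure ℝ) volume := fun v => measurePreserving_add_right volume v
    have hcont : Continuous fun v : ℝ =>
        Lp.compMeasurePreserving (ContinuousMap.curry C v) (hgm v) F :=
      Continuous.compMeasurePreservingLp continuous_const
        (ContinuousMap.curry C).continuous hgm hqtop
    set T := fun v : ℝ => Lp.compMeasurePreserving (ContinuousMap.curry C v) (hgm v) F with hT
    have h0 : Filter.Tendsto (fun v => ‖T v - T 0‖) (nhds 0) (nhds 0) := by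
      have := ((hcont.tendsto 0).sub (tendsto_const_nhds (x := T 0))).norm
      simpa using this
    have hev : ∀ᶠ v in nhds (0:ℝ), ‖T v - T 0‖ < ε := h0.eventually (gt_mem_nhds hε)
    rw [Metric.eventually_nhds_iff] at hev
    obtain ⟨δ', hδ', hball⟩ := hev
    refine ⟨δ' / 2, by positivity, ?_⟩
    intro w hw
    have hwlt : dist w 0 < δ' := by
      rw [Real.dist_eq, sub_zero]
      calc |w| ≤ δ' / 2 := hw
      _ < δ' := by linarith
    have hnorm : ‖T w - T 0‖ < ε := hball hwlt
    have hTw : ⇑(T w) =ᵐ[volume] fun x => f (x + w) := by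
      refine (Lp.coeFn_compMeasurePreserving F (hgm w)).trans ?_
      exact (hgm w).quasiMeasurePreserving.ae_eq_comp (hf.coeFn_toLp)
    have hT0 : ⇑(T 0) =ᵐ[volume] f := by
      refine (Lp.coeFn_compMeasurePreserving F (hgm 0)).trans ?_
      refine ((hgm 0).quasiMeasurePreserving.ae_eq_comp (hf.coeFn_toLp)).trans ?_
      filter_upwards with x
      show f (x + 0) = f x
      rw [add_zero]
    have hkey : eLpNorm (fun x => f (x + w) - f x) q volume
        = eLpNorm (⇑(T w - T 0)) q volume := by
      refine eLpNorm_congr_ae ?_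
      filter_upwards [Lp.coeFn_sub (T w) (T 0), hTw, hT0] with x hx h1x h2x
      rw [hx, Pi.sub_apply, h1x, h2x]
    rw [hkey, ← ENNReal.ofReal_toReal (Lp.eLpNorm_ne_top (T w - T 0)), ← Lp.norm_def]
    exact ENNReal.ofReal_le_ofReal hnorm.le
  refine ⟨δ, hδ, fun s t u hst hu => ?_⟩
  rcases eq_or_ne t s with rfl | hts
  · simp [intervalIntegral.integral_same, Real.zero_rpow hp0.ne',
      Real.zero_rpow (one_div_ne_zero hp0.ne'), Real.zero_rpow (inv_ne_zero hp0.ne')]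
  -- main case
  have hL : (0:ℝ) < |t - s| := abs_pos.mpr (sub_ne_zero.mpr hts)
  set L : ℝ := |t - s| with hLdef
  set M : ℝ≥0∞ := ENNReal.ofReal L with hMdef
  have hM0 : M ≠ 0 := by
    rw [hMdef]
    simpa using hL
  have hMtop : M ≠ ∞ := ENNReal.ofReal_ne_top
  have hIvol : volume (Ι s t) = M := by
    rw [Set.uIoc, Real.volume_Ioc, hMdef, hLdef]
    congr 1
    rw [max_sub_min_eq_abs, abs_sub_comm]
  -- measurability on the product
  have hprod : AEStronglyMeasurable (fun z : ℝ × ℝ => f (z.1 + z.2) - f (z.1 + u))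
      ((volume : Measure ℝ).prod (volume : Measure ℝ)) := by
    have h1 : AEStronglyMeasurable (fun z : ℝ × ℝ => f (z.1 + z.2))
        ((volume : Measure ℝ).prod volume) := by
      have hT : MeasurePreserving (fun z : ℝ × ℝ => (z.1 + z.2, z.2))
          ((volume : Measure ℝ).prod volume) ((volume : Measure ℝ).prod volume) :=
        measurePreserving_add_prod volume volume
      exact (hfm.comp_fst (ν := volume)).comp_quasiMeasurePreserving hT.quasiMeasurePreserving
    have h2 : AEStronglyMeasurable (fun z : ℝ × ℝ => f (z.1 + u))
        ((volume : Measure ℝ).prod volume) := (htrans u).comp_fst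
    exact h1.sub h2
  have hprodR : AEStronglyMeasurable (fun z : ℝ × ℝ => f (z.1 + z.2) - f (z.1 + u))
      ((volume.restrict (Ioc a b)).prod (volume.restrict (Ι s t))) := by
    rw [Measure.prod_restrict]
    exact hprod.restrict
  have hV : AEStronglyMeasurable (fun x => ∫ y in Ι s t, (f (x + y) - f (x + u)))
      (volume.restrict (Ioc a b)) := hprodR.integral_prod_right'
  have hGmeas : ∀ x : ℝ, AEStronglyMeasurable (fun y => f (x + y) - f (x + u))
      (volume.restrict (Ι s t)) := by
    intro x
    have h1 : AEStronglyMeasurable (fun y : ℝ => f (x + y)) (volume : Measure ℝ) :=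
      hfm.comp_quasiMeasurePreserving (measurePreserving_add_left volume x).quasiMeasurePreserving
    exact (h1.sub aestronglyMeasurable_const).restrict
  -- pointwise Hölder in y
  have hexp : (1 - 1/p) * p = p - 1 := by field_simp
  have key1 : ∀ x : ℝ, ((‖∫ y in Ι s t, (f (x + y) - f (x + u))‖₊ : ℝ≥0∞)) ^ p ≤
      M ^ (p - 1) * ∫⁻ y in Ι s t, (‖f (x + y) - f (x + u)‖₊ : ℝ≥0∞) ^ p := by
    intro x
    have s1 : ((‖∫ y in Ι s t, (f (x + y) - f (x + u))‖₊ : ℝ≥0∞)) ≤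
        ∫⁻ y in Ι s t, (‖f (x + y) - f (x + u)‖₊ : ℝ≥0∞) :=
      enorm_integral_le_lintegral_enorm _
    have s2 : (∫⁻ y in Ι s t, (‖f (x + y) - f (x + u)‖₊ : ℝ≥0∞)) ≤
        (∫⁻ y in Ι s t, (‖f (x + y) - f (x + u)‖₊ : ℝ≥0∞) ^ p) ^ (1/p) * M ^ (1 - 1/p) := by
      have h := eLpNorm_le_eLpNorm_mul_rpow_measure_univ (p := 1) (q := q) hq1 (hGmeas x)
      rw [eLpNorm_one_eq_lintegral_enorm, eLpNorm_eq_lintegral_rpow_enorm_toReal hq0 hqtop] at h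
      show (∫⁻ y in Ι s t, ‖f (x + y) - f (x + u)‖ₑ) ≤
          (∫⁻ y in Ι s t, ‖f (x + y) - f (x + u)‖ₑ ^ p) ^ (1/p) * M ^ (1 - 1/p)
      simpa [hqr, Measure.restrict_apply_univ, hIvol] using h
    calc ((‖∫ y in Ι s t, (f (x + y) - f (x + u))‖₊ : ℝ≥0∞)) ^ p
        ≤ ((∫⁻ y in Ι s t, (‖f (x + y) - f (x + u)‖₊ : ℝ≥0∞) ^ p) ^ (1/p)
            * M ^ (1 - 1/p)) ^ p :=
          ENNReal.rpow_le_rpow (s1.trans s2) hp0.le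
    _ = (∫⁻ y in Ι s t, (‖f (x + y) - f (x + u)‖₊ : ℝ≥0∞) ^ p) * M ^ (p - 1) := by
          rw [ENNReal.mul_rpow_of_nonneg _ _ hp0.le, ← ENNReal.rpow_mul, ← ENNReal.rpow_mul,
            one_div, inv_mul_cancel₀ hp0.ne', ENNReal.rpow_one, ← one_div, hexp]
    _ = M ^ (p - 1) * ∫⁻ y in Ι s t, (‖f (x + y) - f (x + u)‖₊ : ℝ≥0∞) ^ p := mul_comm _ _
  -- Fubini
  have swap : (∫⁻ x in Ioc a b, ∫⁻ y in Ι s t, (‖f (x + y) - f (x + u)‖₊ : ℝ≥0∞) ^ p) =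
      ∫⁻ y in Ι s t, ∫⁻ x in Ioc a b, (‖f (x + y) - f (x + u)‖₊ : ℝ≥0∞) ^ p :=
    lintegral_lintegral_swap ((hprodR.enorm).pow_const p)
  -- inner bound via translation continuity
  have inner : ∀ y ∈ Ι s t, (∫⁻ x in Ioc a b, (‖f (x + y) - f (x + u)‖₊ : ℝ≥0∞) ^ p) ≤
      (ENNReal.ofReal ε) ^ p := by
    intro y hy
    have h1 : (∫⁻ x in Ioc a b, (‖f (x + y) - f (x + u)‖₊ : ℝ≥0∞) ^ p) ≤
        ∫⁻ x, (‖f (x + y) - f (x + u)‖₊ : ℝ≥0∞) ^ p ∂(volume : Measure ℝ) :=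
      lintegral_mono' Measure.restrict_le_self le_rfl
    have heq : (fun x => f (x + y) - f (x + u)) =
        (fun x => f (x + (y - u)) - f x) ∘ (fun x : ℝ => x + u) := by
      funext x
      have hxy : x + u + (y - u) = x + y := by ring
      simp only [Function.comp_apply, hxy]
    have habs : |y - u| ≤ δ := by
      have hy' : y ∈ Icc (s ⊓ t) (s ⊔ t) := uIoc_subset_uIcc hy
      have hu' : u ∈ Icc (s ⊓ t) (s ⊔ t) := hu
      have hms : s ⊔ t - s ⊓ t = |t - s| := by
        rw [max_sub_min_eq_abs, abs_sub_comm]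
      refine le_trans ?_ hst
      rw [abs_sub_le_iff]
      constructor <;> [skip; skip] <;>
        · have h1 := hy'.1; have h2 := hy'.2; have h3 := hu'.1; have h4 := hu'.2
          linarith [hms.ge, hms.le]
    have h2 : eLpNorm (fun x => f (x + y) - f (x + u)) q volume ≤ ENNReal.ofReal ε := by
      have hg : AEStronglyMeasurable (fun x => f (x + (y - u)) - f x) (volume : Measure ℝ) :=
        (htrans (y - u)).sub hfm
      rw [heq, eLpNorm_comp_measurePreserving hg (measurePreserving_add_right volume u)]
      exact hΦ _ habs
    have h3 : (∫⁻ x, (‖f (x + y) - f (x + u)‖₊ : ℝ≥0∞) ^ p ∂(volume : Measure ℝ)) =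
        (eLpNorm (fun x => f (x + y) - f (x + u)) q volume) ^ p := by
      rw [eLpNorm_eq_lintegral_rpow_enorm_toReal hq0 hqtop, hqr, ← ENNReal.rpow_mul,
        one_div, inv_mul_cancel₀ hp0.ne', ENNReal.rpow_one]
      rfl
    calc (∫⁻ x in Ioc a b, (‖f (x + y) - f (x + u)‖₊ : ℝ≥0∞) ^ p) ≤
        ∫⁻ x, (‖f (x + y) - f (x + u)‖₊ : ℝ≥0∞) ^ p ∂(volume : Measure ℝ) := h1
    _ = (eLpNorm (fun x => f (x + y) - f (x + u)) q volume) ^ p := h3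
    _ ≤ (ENNReal.ofReal ε) ^ p := ENNReal.rpow_le_rpow h2 hp0.le
  -- main lintegral bound
  have main : (∫⁻ x in Ioc a b, ((‖∫ y in Ι s t, (f (x + y) - f (x + u))‖₊ : ℝ≥0∞)) ^ p) ≤
      ENNReal.ofReal ((ε * L) ^ p) := by
    calc (∫⁻ x in Ioc a b, ((‖∫ y in Ι s t, (f (x + y) - f (x + u))‖₊ : ℝ≥0∞)) ^ p)
        ≤ ∫⁻ x in Ioc a b, M ^ (p - 1) *
            ∫⁻ y in Ι s t, (‖f (x + y) - f (x + u)‖₊ : ℝ≥0∞) ^ p :=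
          lintegral_mono key1
    _ = M ^ (p - 1) * ∫⁻ x in Ioc a b,
          ∫⁻ y in Ι s t, (‖f (x + y) - f (x + u)‖₊ : ℝ≥0∞) ^ p :=
          lintegral_const_mul' _ _
            (ENNReal.rpow_ne_top_of_nonneg (by linarith) hMtop)
    _ = M ^ (p - 1) * ∫⁻ y in Ι s t,
          ∫⁻ x in Ioc a b, (‖f (x + y) - f (x + u)‖₊ : ℝ≥0∞) ^ p := by rw [swap]
    _ ≤ M ^ (p - 1) * ∫⁻ _y in Ι s t, (ENNReal.ofReal ε) ^ p :=
          mul_le_mul_right (setLIntegral_mono measurable_const inner) _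
    _ = M ^ (p - 1) * ((ENNReal.ofReal ε) ^ p * M) := by rw [setLIntegral_const, hIvol]
    _ = (ENNReal.ofReal ε) ^ p * (M ^ (p - 1) * M ^ (1:ℝ)) := by rw [ENNReal.rpow_one]; ring
    _ = (ENNReal.ofReal ε) ^ p * M ^ p := by
          rw [← ENNReal.rpow_add _ _ hM0 hMtop]
          norm_num
    _ = ENNReal.ofReal ((ε * L) ^ p) := by
          rw [hMdef, ENNReal.ofReal_rpow_of_nonneg (abs_nonneg _) hp0.le,
            ENNReal.ofReal_rpow_of_nonneg hε.le hp0.le, ← ENNReal.ofReal_mul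
              (Real.rpow_nonneg hε.le p), ← Real.mul_rpow hε.le (abs_nonneg _)]
  -- convert the goal
  rw [intervalIntegral.integral_of_le hab.le]
  have hnorm_eq : ∀ x : ℝ, ‖∫ y in s..t, (f (x + y) - f (x + u))‖
      = ‖∫ y in Ι s t, (f (x + y) - f (x + u))‖ :=
    fun x => intervalIntegral.norm_intervalIntegral_eq _ _ _ _
  simp only [hnorm_eq]
  have hRconv : (∫ x in Ioc a b, ‖∫ y in Ι s t, (f (x + y) - f (x + u))‖ ^ p) =
      (∫⁻ x in Ioc a b, ((‖∫ y in Ι s t, (f (x + y) - f (x + u))‖₊ : ℝ≥0∞)) ^ p).toReal := by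
    rw [integral_eq_lintegral_of_nonneg_ae
      (Filter.Eventually.of_forall fun x => Real.rpow_nonneg (norm_nonneg _) p)
      ((hV.norm.aemeasurable.pow_const p).aestronglyMeasurable)]
    congr 1
    apply lintegral_congr
    intro x
    rw [← ENNReal.ofReal_rpow_of_nonneg (norm_nonneg _) hp0.le, ofReal_norm]
    rfl
  have hRle : (∫ x in Ioc a b, ‖∫ y in Ι s t, (f (x + y) - f (x + u))‖ ^ p) ≤ (ε * L) ^ p := by
    rw [hRconv]
    calc (∫⁻ x in Ioc a b, ((‖∫ y in Ι s t, (f (x + y) - f (x + u))‖₊ : ℝ≥0∞)) ^ p).toReal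
        ≤ (ENNReal.ofReal ((ε * L) ^ p)).toReal :=
          ENNReal.toReal_mono ENNReal.ofReal_ne_top main
    _ = (ε * L) ^ p := ENNReal.toReal_ofReal (Real.rpow_nonneg (by positivity) p)
  have h0le : (0:ℝ) ≤ ∫ x in Ioc a b, ‖∫ y in Ι s t, (f (x + y) - f (x + u))‖ ^ p :=
    integral_nonneg fun x => Real.rpow_nonneg (norm_nonneg _) _
  calc (∫ x in Ioc a b, ‖∫ y in Ι s t, (f (x + y) - f (x + u))‖ ^ p) ^ (1/p)
      ≤ ((ε * L) ^ p) ^ (1/p) := Real.rpow_le_rpow h0le hRle (by positivity)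
  _ = ε * L := by
      rw [← Real.rpow_mul (by positivity), mul_one_div, div_self hp0.ne', Real.rpow_one]
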